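/- Let N ≥ 1 and let S ⊆ {1,…,N} × {1,…,N} be a set of lattice points. Suppose that for every (a,b) ∈ {1,…,N} × {1,…,N}, at least one of the following holds: |{(x,y) ∈ S : x = a and y ≤ b}| ≤ N + 1 − a, or |{(x,y) ∈ S : y = b and x ≤ a}| ≤ N + 1 − b. Then |S| ≤ N(N+1)/2. -/

import Mathlib

open Finset

private lemma colcard_mono (S : Finset (ℕ × ℕ)) (a : ℕ) {b b' : ℕ} (h : b ≤ b') :
    (S.filter fun r => r.1 = a ∧ r.2 ≤ b).card ≤ (S.filter fun r => r.1 = a ∧ r.2 ≤ b').card := by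
  apply card_le_card
  intro r hr
  simp only [mem_filter] at *
  exact ⟨hr.1, hr.2.1, le_trans hr.2.2 h⟩

private lemma rowcard_mono (S : Finset (ℕ × ℕ)) (b : ℕ) {a a' : ℕ} (h : a ≤ a') :
    (S.filter fun r => r.2 = b ∧ r.1 ≤ a).card ≤ (S.filter fun r => r.2 = b ∧ r.1 ≤ a').card := by
  apply card_le_card
  intro r hr
  simp only [mem_filter] at *
  exact ⟨hr.1, hr.2.1, le_trans hr.2.2 h⟩

private lemma colcard_lt (S : Finset (ℕ × ℕ)) {x y : ℕ} (hp : (x, y) ∈ S) {b b' : ℕ}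
    (hb : b < y) (hb' : y ≤ b') :
    (S.filter fun r => r.1 = x ∧ r.2 ≤ b).card < (S.filter fun r => r.1 = x ∧ r.2 ≤ b').card := by
  apply card_lt_card
  rw [ssubset_iff_of_subset]
  · exact ⟨(x, y), mem_filter.mpr ⟨hp, rfl, hb'⟩, by simp [mem_filter]; omega⟩
  · intro r hr
    simp only [mem_filter] at *
    exact ⟨hr.1, hr.2.1, by omega⟩

private lemma rowcard_lt (S : Finset (ℕ × ℕ)) {x y : ℕ} (hp : (x, y) ∈ S) {a a' : ℕ}
    (ha : a < x) (ha' : x ≤ a') :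
    (S.filter fun r => r.2 = y ∧ r.1 ≤ a).card < (S.filter fun r => r.2 = y ∧ r.1 ≤ a').card := by
  apply card_lt_card
  rw [ssubset_iff_of_subset]
  · exact ⟨(x, y), mem_filter.mpr ⟨hp, rfl, ha'⟩, by simp [mem_filter]; omega⟩
  · intro r hr
    simp only [mem_filter] at *
    exact ⟨hr.1, hr.2.1, by omega⟩

private lemma colcard_pos (S : Finset (ℕ × ℕ)) {x y : ℕ} (hp : (x, y) ∈ S) :
    1 ≤ (S.filter fun r => r.1 = x ∧ r.2 ≤ y).card :=
  card_pos.mpr ⟨(x, y), mem_filter.mpr ⟨hp, rfl, le_refl _⟩⟩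

private lemma rowcard_pos (S : Finset (ℕ × ℕ)) {x y : ℕ} (hp : (x, y) ∈ S) :
    1 ≤ (S.filter fun r => r.2 = y ∧ r.1 ≤ x).card :=
  card_pos.mpr ⟨(x, y), mem_filter.mpr ⟨hp, rfl, le_refl _⟩⟩

private lemma colcard_le (S : Finset (ℕ × ℕ)) (hS : ∀ q ∈ S, 1 ≤ q.2) (a b : ℕ) :
    (S.filter fun r => r.1 = a ∧ r.2 ≤ b).card ≤ b := by
  have : (S.filter fun r => r.1 = a ∧ r.2 ≤ b).card ≤ (Finset.Icc 1 b).card := by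
    apply card_le_card_of_injOn (fun r => r.2)
    · intro r hr
      simp only [mem_coe, mem_filter] at hr
      exact Finset.mem_Icc.mpr ⟨hS r hr.1, hr.2.2⟩
    · intro r hr r' hr' hrr
      simp only [coe_filter, Set.mem_setOf_eq] at hr hr'
      exact Prod.ext (hr.2.1.trans hr'.2.1.symm) hrr
  simpa using this

private lemma rowcard_le (S : Finset (ℕ × ℕ)) (hS : ∀ q ∈ S, 1 ≤ q.1) (a b : ℕ) :
    (S.filter fun r => r.2 = b ∧ r.1 ≤ a).card ≤ a := by
  have : (S.filter fun r => r.2 = b ∧ r.1 ≤ a).card ≤ (Finset.Icc 1 a).card := by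
    apply card_le_card_of_injOn (fun r => r.1)
    · intro r hr
      simp only [mem_coe, mem_filter] at hr
      exact Finset.mem_Icc.mpr ⟨hS r hr.1, hr.2.2⟩
    · intro r hr r' hr' hrr
      simp only [coe_filter, Set.mem_setOf_eq] at hr hr'
      exact Prod.ext hrr (hr.2.1.trans hr'.2.1.symm)
  simpa using this

/-- If `S ⊆ {1,…,N} × {1,…,N}` and for every grid point `(a,b)` either the column set
`{(x,y) ∈ S : x = a, y ≤ b}` has at most `N + 1 - a` points or the row set
`{(x,y) ∈ S : y = b, x ≤ a}` has at most `N + 1 - b` points, then `|S| ≤ N(N+1)/2`. -/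
theorem stmt10 (N : ℕ) (hN : 1 ≤ N) (S : Finset (ℕ × ℕ))
    (hS : S ⊆ Finset.Icc 1 N ×ˢ Finset.Icc 1 N)
    (h : ∀ a b : ℕ, 1 ≤ a → a ≤ N → 1 ≤ b → b ≤ N →
      (S.filter fun p => p.1 = a ∧ p.2 ≤ b).card ≤ N + 1 - a ∨
      (S.filter fun p => p.2 = b ∧ p.1 ≤ a).card ≤ N + 1 - b) :
    2 * S.card ≤ N * (N + 1) := by
  classical
  have hco : ∀ q ∈ S, 1 ≤ q.1 ∧ q.1 ≤ N ∧ 1 ≤ q.2 ∧ q.2 ≤ N := by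
    intro q hq
    have := hS hq
    simp only [Finset.mem_product, Finset.mem_Icc] at this
    tauto
  -- the key predicate: a cell (weakly) north-west of a "row-bad" point of S
  set P : ℕ × ℕ → Prop := fun c => ∃ q ∈ S,
      (N + 1 - q.2 < (S.filter fun r => r.2 = q.2 ∧ r.1 ≤ q.1).card) ∧ c.2 ≤ q.2 ∧ q.1 ≤ c.1
    with hPdef
  -- points satisfying P are column-good
  have hcolOk : ∀ p ∈ S, P p →
      (S.filter fun r => r.1 = p.1 ∧ r.2 ≤ p.2).card ≤ N + 1 - p.1 := by
    intro p hp hPp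
    obtain ⟨q, hq, hqbad, hle2, hle1⟩ := hPp
    obtain ⟨hp1, hp2, hp3, hp4⟩ := hco p hp
    obtain ⟨hq1, hq2, hq3, hq4⟩ := hco q hq
    rcases h p.1 q.2 hp1 hp2 hq3 hq4 with hc | hr
    · exact le_trans (colcard_mono S p.1 hle2) hc
    · exfalso
      have := rowcard_mono S q.2 hle1
      omega
  -- points not satisfying P are row-good
  have hrowOk : ∀ p ∈ S, ¬ P p →
      (S.filter fun r => r.2 = p.2 ∧ r.1 ≤ p.1).card ≤ N + 1 - p.2 := by
    intro p hp hnp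
    by_contra hbad
    push_neg at hbad
    exact hnp ⟨p, hp, hbad, le_refl _, le_refl _⟩
  -- the triangle
  set Δ : Finset (ℕ × ℕ) :=
      (Finset.Icc 1 N ×ˢ Finset.Icc 1 (N + 1)).filter (fun c => c.1 + c.2 ≤ N + 1) with hΔdef
  -- injection of P-points into Δ ∩ P
  have hR : (S.filter fun p => P p).card ≤ (Δ.filter fun c => P c).card := by
    apply card_le_card_of_injOn
      (fun p => (p.1, (S.filter fun r => r.1 = p.1 ∧ r.2 ≤ p.2).card))
    · intro p hp
      rw [mem_coe, mem_filter] at hp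
      obtain ⟨hpS, hpP⟩ := hp
      obtain ⟨hp1, hp2, hp3, hp4⟩ := hco p hpS
      have h1 : 1 ≤ (S.filter fun r => r.1 = p.1 ∧ r.2 ≤ p.2).card := by
        obtain ⟨x, y⟩ := p; exact colcard_pos S hpS
      have h2 := hcolOk p hpS hpP
      have h3 : (S.filter fun r => r.1 = p.1 ∧ r.2 ≤ p.2).card ≤ p.2 := by
        obtain ⟨x, y⟩ := p; exact colcard_le S (fun q hq => (hco q hq).2.2.1) x y
      simp only [mem_coe, mem_filter]
      constructor
      · rw [hΔdef, mem_filter, Finset.mem_product, Finset.mem_Icc, Finset.mem_Icc]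
        refine ⟨⟨⟨hp1, hp2⟩, ⟨h1, by omega⟩⟩, by omega⟩
      · obtain ⟨q, hq, hqbad, hle2, hle1⟩ := hpP
        exact ⟨q, hq, hqbad, by omega, hle1⟩
    · rintro ⟨x, y⟩ hp ⟨x', y'⟩ hp' heq
      simp only [coe_filter, Set.mem_setOf_eq] at hp hp'
      have hx : x = x' := congrArg Prod.fst heq
      subst hx
      have hcards : (S.filter fun r => r.1 = x ∧ r.2 ≤ y).card
          = (S.filter fun r => r.1 = x ∧ r.2 ≤ y').card := congrArg Prod.snd heq
      rcases lt_trichotomy y y' with hlt | hE | hgt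
      · have := colcard_lt S hp'.1 hlt (le_refl y')
        omega
      · rw [hE]
      · have := colcard_lt S hp.1 hgt (le_refl y)
        omega
  -- injection of non-P-points into Δ ∩ ¬P
  have hL : (S.filter fun p => ¬ P p).card ≤ (Δ.filter fun c => ¬ P c).card := by
    apply card_le_card_of_injOn
      (fun p => ((S.filter fun r => r.2 = p.2 ∧ r.1 ≤ p.1).card, p.2))
    · intro p hp
      rw [mem_coe, mem_filter] at hp
      obtain ⟨hpS, hpP⟩ := hp
      obtain ⟨hp1, hp2, hp3, hp4⟩ := hco p hpS
      have h1 : 1 ≤ (S.filter fun r => r.2 = p.2 ∧ r.1 ≤ p.1).card := by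
        obtain ⟨x, y⟩ := p; exact rowcard_pos S hpS
      have h2 := hrowOk p hpS hpP
      have h3 : (S.filter fun r => r.2 = p.2 ∧ r.1 ≤ p.1).card ≤ p.1 := by
        obtain ⟨x, y⟩ := p; exact rowcard_le S (fun q hq => (hco q hq).1) x y
      simp only [mem_coe, mem_filter]
      constructor
      · rw [hΔdef, mem_filter, Finset.mem_product, Finset.mem_Icc, Finset.mem_Icc]
        exact ⟨⟨⟨h1, by omega⟩, ⟨hp3, by omega⟩⟩, by omega⟩
      · intro hPc
        obtain ⟨q, hq, hqbad, hle2, hle1⟩ := hPc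
        exact hpP ⟨q, hq, hqbad, hle2, by omega⟩
    · rintro ⟨x, y⟩ hp ⟨x', y'⟩ hp' heq
      simp only [coe_filter, Set.mem_setOf_eq] at hp hp'
      have hy : y = y' := congrArg Prod.snd heq
      subst hy
      have hcards : (S.filter fun r => r.2 = y ∧ r.1 ≤ x).card
          = (S.filter fun r => r.2 = y ∧ r.1 ≤ x').card := congrArg Prod.fst heq
      rcases lt_trichotomy x x' with hlt | hE | hgt
      · have := rowcard_lt S hp'.1 hlt (le_refl x')
        omega
      · rw [hE]
      · have := rowcard_lt S hp.1 hgt (le_refl x)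
        omega
  -- combine
  have hsplitS : (S.filter fun p => P p).card + (S.filter fun p => ¬ P p).card = S.card :=
    card_filter_add_card_filter_not P
  have hsplitΔ : (Δ.filter fun c => P c).card + (Δ.filter fun c => ¬ P c).card = Δ.card :=
    card_filter_add_card_filter_not P
  have hScard : S.card ≤ Δ.card := by omega
  -- cardinality of the triangle
  have hrect : (Finset.Icc 1 N ×ˢ Finset.Icc 1 (N + 1)).card = N * (N + 1) := by
    rw [Finset.card_product, Nat.card_Icc, Nat.card_Icc]
    simp
  have hsplitR : Δ.card +
      ((Finset.Icc 1 N ×ˢ Finset.Icc 1 (N + 1)).filter fun c => ¬ (c.1 + c.2 ≤ N + 1)).card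
      = N * (N + 1) := by
    rw [hΔdef, card_filter_add_card_filter_not, hrect]
  have hbij : ((Finset.Icc 1 N ×ˢ Finset.Icc 1 (N + 1)).filter
      fun c => ¬ (c.1 + c.2 ≤ N + 1)).card = Δ.card := by
    apply card_nbij' (fun c => (N + 1 - c.1, N + 2 - c.2)) (fun c => (N + 1 - c.1, N + 2 - c.2))
    · intro c hc
      simp only [mem_coe, mem_filter, Finset.mem_product, Finset.mem_Icc] at hc
      rw [hΔdef]
      simp only [mem_coe, mem_filter, Finset.mem_product, Finset.mem_Icc]
      omega
    · intro c hc
      rw [hΔdef] at hc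
      simp only [mem_coe, mem_filter, Finset.mem_product, Finset.mem_Icc] at hc ⊢
      omega
    · intro c hc
      simp only [mem_coe, mem_filter, Finset.mem_product, Finset.mem_Icc] at hc
      obtain ⟨x, y⟩ := c
      simp only [Prod.mk.injEq]
      omega
    · intro c hc
      rw [hΔdef] at hc
      simp only [mem_coe, mem_filter, Finset.mem_product, Finset.mem_Icc] at hc
      obtain ⟨x, y⟩ := c
      simp only [Prod.mk.injEq]
      omega
  omega
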